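/- Let (X, μ) be a measure space, let 0 < τ < 1/2, let p ∈ [1, ∞], and let v, g : X → ℝ be measurable functions such that v(x) + τ·f(v(x)) = g(x) for μ-almost every x. If g ∈ Lᵖ(μ) then v ∈ Lᵖ(μ) and ‖v‖_{Lᵖ(μ)} ≤ (1 − τ)⁻¹·‖g‖_{Lᵖ(μ)}. (This captures the Lᵖ-stability of the nonlinear resolvent asserted in estimate (est:TL2), in the zero-diffusion case.) -/

import Mathlib

open MeasureTheory ENNReal

/-- The Allen–Cahn nonlinearity `f(x) = x³ − x`. -/
noncomputable def acF (x : ℝ) : ℝ := x ^ 3 - x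

/-- `Lᵖ`-stability of the (zero-diffusion) nonlinear resolvent, cf. (est:TL2):
if `0 < τ < 1/2`, `1 ≤ p ≤ ∞`, `v + τ f(v) = g` a.e., and `g ∈ Lᵖ(μ)`, then
`v ∈ Lᵖ(μ)` with `‖v‖_{Lᵖ} ≤ (1 − τ)⁻¹ ‖g‖_{Lᵖ}`. -/
theorem stmt14 {X : Type*} [MeasurableSpace X] (μ : Measure X)
    (τ : ℝ) (hτ0 : 0 < τ) (hτ : τ < 1 / 2)
    (p : ℝ≥0∞) (hp : 1 ≤ p)
    (v g : X → ℝ) (hv : Measurable v) (hg : Measurable g)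
    (heq : ∀ᵐ x ∂μ, v x + τ * acF (v x) = g x)
    (hgLp : MemLp g p μ) :
    MemLp v p μ ∧ eLpNorm v p μ ≤ ENNReal.ofReal (1 - τ)⁻¹ * eLpNorm g p μ := by
  have h1τ : (0:ℝ) < 1 - τ := by linarith
  have hpt : ∀ᵐ x ∂μ, ‖v x‖ ≤ (1 - τ)⁻¹ * ‖g x‖ := by
    filter_upwards [heq] with x hx
    simp only [acF] at hx
    have key : (1 - τ) * |v x| ≤ |g x| := by
      rcases le_total 0 (v x) with h | h
      · have hg0 : 0 ≤ g x := by nlinarith [pow_nonneg h 3]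
        rw [abs_of_nonneg h, abs_of_nonneg hg0]; nlinarith [pow_nonneg h 3]
      · have hg0 : g x ≤ 0 := by nlinarith [Odd.pow_nonpos (⟨1, by ring⟩ : Odd 3) h]
        rw [abs_of_nonpos h, abs_of_nonpos hg0]; nlinarith [Odd.pow_nonpos (⟨1, by ring⟩ : Odd 3) h]
    rw [Real.norm_eq_abs, Real.norm_eq_abs, inv_mul_eq_div, le_div_iff₀ h1τ]
    linarith [key]
  exact ⟨hgLp.of_le_mul hv.aestronglyMeasurable hpt,
    eLpNorm_le_mul_eLpNorm_of_ae_le_mul hpt p⟩
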